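/- Let ⟨A,∧,∨,→,∼,1⟩ be a Nelson algebra. Then for all x,y in A the strong implication is recovered from two applications of the weak one: x→y = x↣(x↣y), where x↣y:=(x→y)∧(∼y→∼x). -/
import Mathlib


/-- A Nelson algebra ⟨A,∧,∨,→,∼,1⟩ of type (2,2,2,1,0). -/
structure NelsonAlgebra (A : Type*) where
  meet : A → A → A
  join : A → A → A
  imp : A → A → A
  neg : A → A
  one : A
  n1 : ∀ x y, meet x (join x y) = x
  n2 : ∀ x y z, meet x (join y z) = join (meet z x) (meet y x)
  n3 : ∀ x, neg (neg x) = x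
  n4 : ∀ x y, neg (meet x y) = join (neg x) (neg y)
  n5 : ∀ x y, meet x (neg x) = meet (meet x (neg x)) (join y (neg y))
  n6 : ∀ x, imp x x = one
  n7 : ∀ x y, meet x (imp x y) = meet x (join (neg x) y)
  n8 : ∀ x y z, imp (meet x y) z = imp x (imp y z)

/-- The weak implication x↣y := (x→y)∧(∼y→∼x). -/
def NelsonAlgebra.wimp {A : Type*} (N : NelsonAlgebra A) (x y : A) : A :=
  N.meet (N.imp x y) (N.imp (N.neg y) (N.neg x))

namespace NelsonAlgebra
variable {A : Type*} (N : NelsonAlgebra A)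

lemma e3 (x y : A) : x = N.join (N.meet y x) (N.meet x x) := by
  conv_lhs => rw [← N.n1 x y, N.n2]

lemma e4 (x : A) : x = N.join (N.meet x x) (N.meet x x) := N.e3 x x

lemma e5 (x : A) : N.meet (N.meet x x) x = N.meet x x := by
  have h := N.n1 (N.meet x x) (N.meet x x)
  rw [← N.e4 x] at h
  exact h

lemma midem (x : A) : N.meet x x = x := by
  have h := N.n2 x (N.meet x x) (N.meet x x)
  rw [N.e5] at h
  rw [← N.e4 x] at h
  exact h

lemma jidem (x : A) : N.join x x = x := by
  have h := (N.e4 x).symm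
  rw [N.midem] at h
  exact h

lemma e9 (z x : A) : N.join (N.meet z x) x = x := by
  have h := (N.e3 x z).symm
  rw [N.midem] at h
  exact h

lemma mcomm (x y : A) : N.meet x y = N.meet y x := by
  have h := N.n2 x y y
  rw [N.jidem, N.jidem] at h
  exact h

lemma p1 (y x : A) : N.meet (N.meet y x) x = N.meet y x := by
  have h := N.n1 (N.meet y x) x
  rw [N.e9] at h
  exact h

lemma mxmyx (x y : A) : N.meet x (N.meet y x) = N.meet y x := by
  rw [N.mcomm, N.p1]

lemma absA (x y : A) : N.join x (N.meet y x) = x := by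
  have h1 : N.meet (N.meet y x) (N.join x (N.meet y x)) = N.meet y x := by
    have h := N.n2 (N.meet y x) x (N.meet y x)
    rw [N.midem, N.mxmyx, N.jidem] at h
    exact h
  have h2 := N.n2 (N.join x (N.meet y x)) x (N.meet y x)
  rw [h1, N.n1, N.midem, N.e9] at h2
  exact h2

lemma absA' (x y : A) : N.join x (N.meet x y) = x := by rw [N.mcomm x y, N.absA]

lemma yabs (y x : A) : N.meet y (N.join x y) = y := by
  have h := N.n2 y x y
  rw [N.midem] at h
  rw [h, N.absA y x]

lemma jcomm (x y : A) : N.join x y = N.join y x := by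
  have h1 : N.meet (N.join y x) (N.join x y) = N.join y x := by
    rw [N.n2, N.n1, N.yabs]
  have h2 : N.meet (N.join x y) (N.join y x) = N.join x y := by
    rw [N.n2, N.n1, N.yabs]
  rw [← h1, N.mcomm, h2]

lemma join_le (u v x : A) (hu : N.meet u x = u) (hv : N.meet v x = v) :
    N.meet (N.join u v) x = N.join u v := by
  rw [N.mcomm, N.n2, hu, hv, N.jcomm]

lemma jassoc (a b c : A) : N.join (N.join a b) c = N.join a (N.join b c) := by
  have hax : N.meet a (N.join (N.join a b) c) = a := by
    rw [N.n2, N.mcomm (N.join a b) a, N.n1, N.e9]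
  have hbx : N.meet b (N.join (N.join a b) c) = b := by
    rw [N.n2, N.mcomm (N.join a b) b, N.yabs, N.e9]
  have hcx : N.meet c (N.join (N.join a b) c) = c := by
    rw [N.n2, N.midem, N.absA c (N.join a b)]
  have hay : N.meet a (N.join a (N.join b c)) = a := N.n1 _ _
  have hby : N.meet b (N.join a (N.join b c)) = b := by
    rw [N.n2, N.mcomm (N.join b c) b, N.n1, N.absA b a]
  have hcy : N.meet c (N.join a (N.join b c)) = c := by
    rw [N.n2, N.mcomm (N.join b c) c, N.yabs, N.absA c a]
  have h1 : N.meet (N.join (N.join a b) c) (N.join a (N.join b c)) =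
      N.join (N.join b c) a := by
    rw [N.n2, N.join_le _ _ _ hbx hcx, hax]
  have h2 : N.meet (N.join a (N.join b c)) (N.join (N.join a b) c) =
      N.join c (N.join a b) := by
    rw [N.n2, N.join_le _ _ _ hay hby, hcy]
  have h3 := N.mcomm (N.join (N.join a b) c) (N.join a (N.join b c))
  rw [h1, h2] at h3
  rw [N.jcomm (N.join a b) c, ← h3, N.jcomm (N.join b c) a]

lemma le_glb (u a b : A) (h1 : N.meet u a = u) (h2 : N.meet u b = u) :
    N.meet u (N.meet a b) = u := by
  have hb : N.join b u = b := by
    have h := N.absA' b u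
    rw [N.mcomm b u, h2] at h
    exact h
  have key : N.meet a b = N.join u (N.meet a b) := by
    conv_lhs => rw [← hb]
    rw [N.n2, h1, N.mcomm b a]
  conv_lhs => rw [key]
  rw [N.n1]

lemma le_trans' (u v w : A) (h1 : N.meet u v = u) (h2 : N.meet v w = v) :
    N.meet u w = u := by
  have j1 : N.join u v = v := by
    have h := N.e9 u v
    rw [N.mcomm u v] at h
    rw [← h1]
    conv_lhs => rw [N.mcomm]
    exact h
  have j2 : N.join v w = w := by
    have h := N.e9 v w
    rw [N.mcomm v w] at h
    rw [← h2]
    conv_lhs => rw [N.mcomm]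
    exact h
  have j3 : N.join u w = w := by rw [← j2, ← N.jassoc, j1]
  have h := N.n1 u w
  rw [j3] at h
  exact h

lemma p1'' (a c : A) : N.meet (N.meet a c) a = N.meet a c := by
  rw [N.mcomm a c, N.p1]

lemma massoc (a b c : A) : N.meet (N.meet a b) c = N.meet a (N.meet b c) := by
  have l1a : N.meet (N.meet (N.meet a b) c) a = N.meet (N.meet a b) c :=
    N.le_trans' _ _ _ (N.p1'' (N.meet a b) c) (N.p1'' a b)
  have l1b : N.meet (N.meet (N.meet a b) c) b = N.meet (N.meet a b) c :=
    N.le_trans' _ _ _ (N.p1'' (N.meet a b) c) (N.p1 a b)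
  have l1c : N.meet (N.meet (N.meet a b) c) c = N.meet (N.meet a b) c := N.p1 _ _
  have r1a : N.meet (N.meet a (N.meet b c)) a = N.meet a (N.meet b c) :=
    N.p1'' a (N.meet b c)
  have r1b : N.meet (N.meet a (N.meet b c)) b = N.meet a (N.meet b c) :=
    N.le_trans' _ _ _ (N.p1 a (N.meet b c)) (N.p1'' b c)
  have r1c : N.meet (N.meet a (N.meet b c)) c = N.meet a (N.meet b c) :=
    N.le_trans' _ _ _ (N.p1 a (N.meet b c)) (N.p1 b c)
  have hL : N.meet (N.meet (N.meet a b) c) (N.meet a (N.meet b c)) = N.meet (N.meet a b) c :=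
    N.le_glb _ _ _ l1a (N.le_glb _ _ _ l1b l1c)
  have hR : N.meet (N.meet a (N.meet b c)) (N.meet (N.meet a b) c) = N.meet a (N.meet b c) :=
    N.le_glb _ _ _ (N.le_glb _ _ _ r1a r1b) r1c
  rw [← hL, N.mcomm, hR]

lemma distrib (x y z : A) : N.meet x (N.join y z) = N.join (N.meet x y) (N.meet x z) := by
  rw [N.n2, N.jcomm, N.mcomm y x, N.mcomm z x]

lemma distrib' (x y z : A) : N.join (N.meet x y) (N.meet x z) = N.meet x (N.join y z) :=
  (N.distrib x y z).symm

lemma dm_join (x y : A) : N.neg (N.join x y) = N.meet (N.neg x) (N.neg y) := by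
  have h : N.join x y = N.join (N.neg (N.neg x)) (N.neg (N.neg y)) := by
    rw [N.n3, N.n3]
  rw [h, ← N.n4, N.n3]

lemma top (x : A) : N.meet x N.one = x := by
  have h1 : N.meet (N.join x (N.neg x)) N.one = N.join x (N.neg x) := by
    have h := N.n7 (N.join x (N.neg x)) (N.join x (N.neg x))
    rw [N.n6, N.yabs] at h
    exact h
  have h3 : N.meet (N.meet x (N.join x (N.neg x))) N.one = x := by
    rw [N.massoc, h1, N.n1]
  conv_lhs => rw [← N.n1 x (N.neg x)]
  exact h3

lemma top' (x : A) : N.meet N.one x = x := by rw [N.mcomm, N.top]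

lemma topj (x : A) : N.join x N.one = N.one := by
  have h := N.e9 x N.one
  rw [N.top] at h
  exact h

lemma topj' (x : A) : N.join N.one x = N.one := by rw [N.jcomm, N.topj]

lemma botj (x : A) : N.join x (N.neg N.one) = x := by
  have h : N.neg (N.meet (N.neg x) N.one) = N.neg (N.neg x) := by rw [N.top]
  rw [N.n4, N.n3] at h
  exact h

lemma botj' (x : A) : N.join (N.neg N.one) x = x := by rw [N.jcomm, N.botj]

lemma bot (x : A) : N.meet x (N.neg N.one) = N.neg N.one := by
  have h := N.yabs (N.neg N.one) x
  rw [N.botj] at h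
  rw [N.mcomm]
  exact h

lemma bot' (x : A) : N.meet (N.neg N.one) x = N.neg N.one := by rw [N.mcomm, N.bot]

lemma c0 (y : A) : N.imp N.one y = y := by
  have h := N.n7 N.one y
  rw [N.top', N.top'] at h
  rw [h, N.botj']

lemma c3 (y : A) : N.imp y N.one = N.one := by
  have h := N.n8 y y y
  rw [N.midem, N.n6] at h
  exact h.symm

lemma c1' (x y : A) : N.imp x (N.imp x y) = N.imp x y := by
  rw [← N.n8, N.midem]

lemma exch (x y z : A) : N.imp x (N.imp y z) = N.imp y (N.imp x z) := by
  rw [← N.n8, ← N.n8, N.mcomm]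

end NelsonAlgebra

namespace NelsonAlgebra
variable {A : Type*} (N : NelsonAlgebra A)

/-- lattice order -/
def ple (a b : A) : Prop := N.meet a b = a

lemma ple_refl (a : A) : N.ple a a := N.midem a

lemma ple_trans {a b c : A} (h1 : N.ple a b) (h2 : N.ple b c) : N.ple a c :=
  N.le_trans' a b c h1 h2

lemma ple_antisymm {a b : A} (h1 : N.ple a b) (h2 : N.ple b a) : a = b := by
  have := N.mcomm a b
  rw [h1, h2] at this
  exact this

lemma meet_le_left (a b : A) : N.ple (N.meet a b) a := N.p1'' a b
lemma meet_le_right (a b : A) : N.ple (N.meet a b) b := N.p1 a b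
lemma le_meet {c a b : A} (h1 : N.ple c a) (h2 : N.ple c b) : N.ple c (N.meet a b) :=
  N.le_glb c a b h1 h2
lemma le_join_left (a b : A) : N.ple a (N.join a b) := N.n1 a b
lemma le_join_right (b a : A) : N.ple b (N.join a b) := N.yabs b a
lemma sup_le {a b c : A} (h1 : N.ple a c) (h2 : N.ple b c) : N.ple (N.join a b) c :=
  N.join_le a b c h1 h2
lemma join_eq_of_le {a b : A} (h : N.ple a b) : N.join a b = b := by
  have h' : N.meet a b = a := h
  conv_lhs => rw [← h']
  rw [N.e9]
lemma le_of_join_eq {a b : A} (h : N.join a b = b) : N.ple a b := by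
  show N.meet a b = a
  conv_lhs => rw [← h]
  exact N.n1 a b
lemma le_of_eq_join {a p q c : A} (h : a = N.join p q) (h1 : N.ple p c) (h2 : N.ple q c) :
    N.ple a c := by rw [h]; exact N.sup_le h1 h2
lemma neg_mono {a b : A} (h : N.ple a b) : N.ple (N.neg b) (N.neg a) := by
  have h2 : N.neg a = N.join (N.neg a) (N.neg b) := by
    conv_lhs => rw [← h]
    rw [N.n4]
  apply N.le_of_join_eq
  rw [N.jcomm, ← h2]
lemma n5le (a b : A) : N.ple (N.meet a (N.neg a)) (N.join b (N.neg b)) := (N.n5 a b).symm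

lemma distribJ (x y z : A) : N.join x (N.meet y z) = N.meet (N.join x y) (N.join x z) := by
  rw [N.distrib, N.mcomm (N.join x y) x, N.n1, N.mcomm (N.join x y) z, N.distrib,
     ← N.jassoc, N.absA x z, N.mcomm z y]

/-- weak preorder, in its lattice form -/
def pre (a b : A) : Prop := N.ple a (N.join (N.neg a) b)

lemma pre_of_le {a b : A} (h : N.ple a b) : N.pre a b :=
  N.ple_trans h (N.le_join_right b (N.neg a))

lemma pre_refl (a : A) : N.pre a a := N.pre_of_le (N.ple_refl a)

lemma pre_le_trans {a b c : A} (h1 : N.pre a b) (h2 : N.ple b c) : N.pre a c :=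
  N.ple_trans h1 (N.sup_le (N.le_join_left _ _) (N.ple_trans h2 (N.le_join_right _ _)))

lemma le_pre_trans {a b c : A} (h1 : N.ple a b) (h2 : N.pre b c) : N.pre a c := by
  have ha : N.meet a (N.join (N.neg b) c) = a := N.ple_trans h1 h2
  have E : a = N.join (N.meet a (N.neg b)) (N.meet a c) := by
    rw [N.distrib] at ha
    exact ha.symm
  apply N.le_of_eq_join E
  · exact N.ple_trans (N.ple_trans (N.meet_le_right a (N.neg b)) (N.neg_mono h1))
      (N.le_join_left _ _)
  · exact N.ple_trans (N.meet_le_right a c) (N.le_join_right _ _)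

lemma pre_glb {a b c : A} (h1 : N.pre a b) (h2 : N.pre a c) : N.pre a (N.meet b c) := by
  have := N.le_meet h1 h2
  rwa [← N.distribJ] at this

lemma pre_lub {a b c : A} (h1 : N.pre a c) (h2 : N.pre b c) : N.pre (N.join a b) c := by
  show N.ple _ (N.join (N.neg (N.join a b)) c)
  rw [N.dm_join]
  set T := N.join (N.meet (N.neg a) (N.neg b)) c with hT
  have Ea : a = N.join (N.meet a (N.neg a)) (N.meet a c) := by
    have h : N.meet a (N.join (N.neg a) c) = a := h1
    rw [N.distrib] at h
    exact h.symm
  have Eb : b = N.join (N.meet b (N.neg b)) (N.meet b c) := by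
    have h : N.meet b (N.join (N.neg b) c) = b := h2
    rw [N.distrib] at h
    exact h.symm
  have key : ∀ p q : A, p = N.join (N.meet p (N.neg p)) (N.meet p c) →
      q = N.join (N.meet q (N.neg q)) (N.meet q c) →
      N.ple (N.meet p (N.neg p)) (N.join (N.meet (N.neg p) (N.neg q)) c) := by
    intro p q _ hq
    have e5 : N.meet p (N.neg p) =
        N.join (N.meet (N.meet p (N.neg p)) q) (N.meet (N.meet p (N.neg p)) (N.neg q)) := by
      have h5 : N.meet (N.meet p (N.neg p)) (N.join q (N.neg q)) = N.meet p (N.neg p) :=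
        N.n5le p q
      rw [N.distrib] at h5
      exact h5.symm
    apply N.le_of_eq_join e5
    · have e6 : N.meet (N.meet p (N.neg p)) q =
          N.join (N.meet (N.meet p (N.neg p)) (N.meet q (N.neg q)))
                 (N.meet (N.meet p (N.neg p)) (N.meet q c)) := by
        conv_lhs => rw [hq]
        rw [N.distrib]
      apply N.le_of_eq_join e6
      · exact N.ple_trans (N.le_meet
          (N.ple_trans (N.meet_le_left _ _) (N.meet_le_right p (N.neg p)))
          (N.ple_trans (N.meet_le_right _ _) (N.meet_le_right q (N.neg q))))
          (N.le_join_left _ _)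
      · exact N.ple_trans (N.ple_trans (N.meet_le_right _ _) (N.meet_le_right q c))
          (N.le_join_right _ _)
    · exact N.ple_trans (N.le_meet
        (N.ple_trans (N.meet_le_left _ _) (N.meet_le_right p (N.neg p)))
        (N.meet_le_right _ _)) (N.le_join_left _ _)
  have hA : N.ple a T := by
    apply N.le_of_eq_join Ea
    · exact key a b Ea Eb
    · exact N.ple_trans (N.meet_le_right a c) (N.le_join_right _ _)
  have hB : N.ple b T := by
    apply N.le_of_eq_join Eb
    · have := key b a Eb Ea
      rwa [N.mcomm (N.neg b) (N.neg a)] at this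
    · exact N.ple_trans (N.meet_le_right b c) (N.le_join_right _ _)
  exact N.sup_le hA hB

lemma neg_pre_flip {u v : A} (h : N.pre (N.neg v) (N.neg u)) : N.ple (N.meet u (N.neg v)) v := by
  have h1 : N.meet (N.neg v) (N.join v (N.neg u)) = N.neg v := by
    have h' : N.meet (N.neg v) (N.join (N.neg (N.neg v)) (N.neg u)) = N.neg v := h
    rwa [N.n3] at h'
  have h2 : v = N.join v (N.meet (N.neg v) u) := by
    have h3 := congrArg N.neg h1
    rw [N.n4, N.dm_join, N.n3, N.n3] at h3
    exact h3.symm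
  apply N.le_of_join_eq
  rw [N.mcomm u (N.neg v)]
  rw [N.jcomm]
  exact h2.symm

lemma eq_of_pre4 {u v : A} (h1 : N.pre u v) (h2 : N.pre v u)
    (h3 : N.pre (N.neg u) (N.neg v)) (h4 : N.pre (N.neg v) (N.neg u)) : u = v := by
  have key : ∀ p q : A, N.pre p q → N.pre (N.neg q) (N.neg p) → N.ple p q := by
    intro p q hp hq
    have Ep : p = N.join (N.meet p (N.neg p)) (N.meet p q) := by
      have h : N.meet p (N.join (N.neg p) q) = p := hp
      rw [N.distrib] at h
      exact h.symm
    apply N.le_of_eq_join Ep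
    · have e5 : N.meet p (N.neg p) =
          N.join (N.meet (N.meet p (N.neg p)) q) (N.meet (N.meet p (N.neg p)) (N.neg q)) := by
        have h5 : N.meet (N.meet p (N.neg p)) (N.join q (N.neg q)) = N.meet p (N.neg p) :=
          N.n5le p q
        rw [N.distrib] at h5
        exact h5.symm
      apply N.le_of_eq_join e5
      · exact N.meet_le_right _ _
      · exact N.ple_trans (N.le_meet
          (N.ple_trans (N.meet_le_left _ _) (N.meet_le_left p (N.neg p)))
          (N.meet_le_right _ _)) (N.neg_pre_flip hq)
    · exact N.meet_le_right p q
  exact N.ple_antisymm (key u v h1 h4) (key v u h2 h3)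

/- ## weak calculus -/
lemma wle {a b : A} (h : N.ple a b) : N.imp a b = N.one := by
  conv_lhs => rw [show a = N.meet a b from h.symm]
  rw [N.n8, N.n6, N.c3]

lemma r5fwd {x y : A} (h : N.pre x y) : N.imp x y = N.one := by
  have h' : N.meet x (N.join (N.neg x) y) = x := h
  have h2 := N.n7 x y
  rw [h'] at h2
  have h3 : N.imp x (N.imp x y) = N.one := N.wle h2
  rwa [N.c1'] at h3

lemma r5bwd {x y : A} (h : N.imp x y = N.one) : N.pre x y := by
  have h2 := N.n7 x y
  rw [h, N.top] at h2
  show N.meet x (N.join (N.neg x) y) = x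
  exact h2.symm

lemma exchfact (x y : A) : N.imp y (N.imp x y) = N.one := by
  rw [N.exch, N.n6, N.c3]

lemma w1w (x y : A) : N.pre y (N.imp x y) := N.r5bwd (N.exchfact x y)

lemma pre_contr (a c : A) : N.pre (N.meet a (N.neg a)) c := by
  have h1 : N.ple (N.neg a) (N.neg (N.meet a (N.neg a))) := by
    rw [N.n4]
    exact N.le_join_left _ _
  exact N.ple_trans (N.ple_trans (N.meet_le_right a (N.neg a)) h1)
    (N.le_join_left _ _)

lemma contr (a w : A) : N.imp (N.meet a (N.neg a)) w = N.one := N.r5fwd (N.pre_contr a w)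

lemma w2w (x y : A) : N.pre (N.neg x) (N.imp x y) := by
  apply N.r5bwd
  have h : N.imp (N.meet (N.neg x) x) y = N.one := by
    rw [N.mcomm]
    exact N.contr x y
  rwa [N.n8] at h

lemma pre_imp {w c d : A} (h : N.pre (N.meet w c) d) : N.pre w (N.imp c d) := by
  apply N.r5bwd
  have h2 := N.r5fwd h
  rwa [N.n8] at h2

lemma genx (x y : A) : N.ple (N.meet x (N.neg x)) (N.imp x y) := by
  have h := N.n7 x (N.imp x y)
  rw [N.c1'] at h
  rw [N.distrib] at h
  have h2 : N.ple (N.meet x (N.neg x)) (N.meet x (N.imp x y)) := by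
    apply N.le_of_join_eq
    exact h.symm
  exact N.ple_trans h2 (N.meet_le_right _ _)

lemma f2 (x y : A) :
    N.join (N.neg x) (N.neg (N.imp x y)) = N.join (N.neg x) (N.meet x (N.neg y)) := by
  have h := congrArg N.neg (N.n7 x y)
  rw [N.n4, N.n4, N.dm_join, N.n3] at h
  exact h

lemma nt_pre_x (x y : A) : N.pre (N.neg (N.imp x y)) x := by
  show N.ple _ (N.join (N.neg (N.neg (N.imp x y))) x)
  rw [N.n3]
  set t := N.imp x y with ht
  have h1 : N.ple (N.neg t) (N.join (N.neg x) (N.meet x (N.neg y))) := by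
    rw [← N.f2 x y]
    exact N.le_join_right _ _
  have E1 : N.neg t = N.join (N.meet (N.neg t) (N.neg x))
      (N.meet (N.neg t) (N.meet x (N.neg y))) := by
    have h2 : N.meet (N.neg t) (N.join (N.neg x) (N.meet x (N.neg y))) = N.neg t := h1
    rw [N.distrib] at h2
    exact h2.symm
  apply N.le_of_eq_join E1
  · have hW : N.ple (N.neg x) (N.join x t) := by
      have h' : N.ple (N.neg x) (N.join (N.neg (N.neg x)) (N.imp x y)) := N.w2w x y
      rwa [N.n3] at h'
    have E2 : N.meet (N.neg t) (N.neg x) =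
        N.join (N.meet (N.meet (N.neg t) (N.neg x)) x)
               (N.meet (N.meet (N.neg t) (N.neg x)) t) := by
      have hW' : N.meet (N.neg x) (N.join x t) = N.neg x := hW
      conv_lhs => rw [← hW']
      rw [← N.massoc, N.distrib]
    apply N.le_of_eq_join E2
    · exact N.ple_trans (N.meet_le_right _ _) (N.le_join_right x t)
    · exact N.ple_trans (N.meet_le_right _ _) (N.le_join_left t x)
  · exact N.ple_trans (N.ple_trans (N.meet_le_right _ _) (N.meet_le_left x (N.neg y)))
      (N.le_join_right x t)

lemma nt_pre_ny (x y : A) : N.pre (N.neg (N.imp x y)) (N.neg y) := by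
  show N.ple _ (N.join (N.neg (N.neg (N.imp x y))) (N.neg y))
  rw [N.n3]
  set t := N.imp x y with ht
  have h1 : N.ple (N.neg t) (N.join (N.neg x) (N.meet x (N.neg y))) := by
    rw [← N.f2 x y]
    exact N.le_join_right _ _
  have E1 : N.neg t = N.join (N.meet (N.neg t) (N.neg x))
      (N.meet (N.neg t) (N.meet x (N.neg y))) := by
    have h2 : N.meet (N.neg t) (N.join (N.neg x) (N.meet x (N.neg y))) = N.neg t := h1
    rw [N.distrib] at h2
    exact h2.symm
  apply N.le_of_eq_join E1
  · have hW : N.ple (N.neg x) (N.join x t) := by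
      have h' : N.ple (N.neg x) (N.join (N.neg (N.neg x)) (N.imp x y)) := N.w2w x y
      rwa [N.n3] at h'
    have E2 : N.meet (N.neg t) (N.neg x) =
        N.join (N.meet (N.meet (N.neg t) (N.neg x)) x)
               (N.meet (N.meet (N.neg t) (N.neg x)) t) := by
      have hW' : N.meet (N.neg x) (N.join x t) = N.neg x := hW
      conv_lhs => rw [← hW']
      rw [← N.massoc, N.distrib]
    apply N.le_of_eq_join E2
    · have : N.ple (N.meet (N.meet (N.neg t) (N.neg x)) x) (N.meet x (N.neg x)) :=
        N.le_meet (N.meet_le_right _ _)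
          (N.ple_trans (N.meet_le_left _ _) (N.meet_le_right (N.neg t) (N.neg x)))
      exact N.ple_trans (N.ple_trans this (N.genx x y)) (N.le_join_left t (N.neg y))
    · exact N.ple_trans (N.meet_le_right _ _) (N.le_join_left t (N.neg y))
  · exact N.ple_trans (N.ple_trans (N.meet_le_right _ _) (N.meet_le_right x (N.neg y)))
      (N.le_join_right (N.neg y) t)

/- ## strong per-arrow bounds -/
lemma v4 (x y : A) : N.ple y (N.imp x y) := by
  have heq : N.meet y (N.imp x y) = y := by
    apply N.eq_of_pre4
    · exact N.pre_of_le (N.meet_le_left _ _)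
    · exact N.pre_glb (N.pre_refl y) (N.w1w x y)
    · rw [N.n4]
      exact N.pre_lub (N.pre_refl (N.neg y)) (N.nt_pre_ny x y)
    · rw [N.n4]
      exact N.pre_of_le (N.le_join_left _ _)
  exact heq

lemma v3 (x y : A) : N.ple (N.neg x) (N.imp x y) := by
  have heq : N.meet (N.neg x) (N.imp x y) = N.neg x := by
    apply N.eq_of_pre4
    · exact N.pre_of_le (N.meet_le_left _ _)
    · exact N.pre_glb (N.pre_refl (N.neg x)) (N.w2w x y)
    · rw [N.n4, N.n3]
      exact N.pre_lub (N.pre_refl x) (N.nt_pre_x x y)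
    · rw [N.n4, N.n3]
      exact N.pre_of_le (N.le_join_left _ _)
  exact heq

lemma g2 (x y : A) : N.ple (N.neg (N.imp x y)) x := by
  apply N.le_of_join_eq
  apply N.eq_of_pre4
  · exact N.pre_lub (N.nt_pre_x x y) (N.pre_refl x)
  · exact N.pre_of_le (N.le_join_right _ _)
  · rw [N.dm_join, N.n3]
    exact N.pre_of_le (N.meet_le_right _ _)
  · rw [N.dm_join, N.n3]
    exact N.pre_glb (N.w2w x y) (N.pre_refl (N.neg x))

lemma g2b (x y : A) : N.ple (N.neg (N.imp x y)) (N.neg y) := by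
  apply N.le_of_join_eq
  apply N.eq_of_pre4
  · exact N.pre_lub (N.nt_pre_ny x y) (N.pre_refl (N.neg y))
  · exact N.pre_of_le (N.le_join_right _ _)
  · rw [N.dm_join, N.n3, N.n3]
    exact N.pre_of_le (N.meet_le_right _ _)
  · rw [N.dm_join, N.n3, N.n3]
    exact N.pre_glb (N.w1w x y) (N.pre_refl y)

end NelsonAlgebra

namespace NelsonAlgebra
variable {A : Type*} (N : NelsonAlgebra A)

lemma pre_imp' {w c d : A} (h : N.pre (N.meet c w) d) : N.pre w (N.imp c d) := by
  apply N.pre_imp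
  rwa [N.mcomm] at h

lemma f1d (x c : A) : N.meet x (N.imp x c) =
    N.join (N.meet x (N.neg x)) (N.meet x c) := by
  rw [N.n7, N.distrib]

lemma pre_of_aux {a b c : A} (hba : N.ple a b) (h : N.ple a (N.join (N.neg b) c)) :
    N.pre a c :=
  N.ple_trans h (N.sup_le (N.ple_trans (N.neg_mono hba) (N.le_join_left _ _))
    (N.le_join_right _ _))

lemma nt2x (x y : A) : N.ple (N.neg (N.imp (N.neg y) (N.neg x))) x := by
  have h := N.g2b (N.neg y) (N.neg x)
  rwa [N.n3] at h

lemma nt2ny (x y : A) : N.ple (N.neg (N.imp (N.neg y) (N.neg x))) (N.neg y) :=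
  N.g2 (N.neg y) (N.neg x)

lemma yt2 (x y : A) : N.ple y (N.imp (N.neg y) (N.neg x)) := by
  have h := N.v3 (N.neg y) (N.neg x)
  rwa [N.n3] at h

/-- pre (m x t1) y -/
lemma pre_mxt1_y (x y : A) : N.pre (N.meet x (N.imp x y)) y := by
  rw [N.f1d x y]
  exact N.pre_lub (N.pre_contr x y) (N.pre_of_le (N.meet_le_right x y))

/-- preA : pre P t1 -/
lemma preA (x y : A) :
    N.pre (N.imp x (N.meet (N.imp x y) (N.imp (N.neg y) (N.neg x)))) (N.imp x y) := by
  apply N.pre_imp'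
  rw [N.f1d]
  apply N.pre_lub (N.pre_contr x y)
  have hle : N.ple (N.meet x (N.meet (N.imp x y) (N.imp (N.neg y) (N.neg x))))
      (N.meet x (N.imp x y)) :=
    N.le_meet (N.meet_le_left _ _)
      (N.ple_trans (N.meet_le_right _ _) (N.meet_le_left _ _))
  exact N.le_pre_trans hle (N.pre_mxt1_y x y)

/-- preB : pre t1 P -/
lemma preB (x y : A) :
    N.pre (N.imp x y) (N.imp x (N.meet (N.imp x y) (N.imp (N.neg y) (N.neg x)))) := by
  apply N.pre_imp'
  rw [N.f1d x y]
  apply N.pre_lub (N.pre_contr x _)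
  exact N.pre_glb
    (N.pre_of_le (N.ple_trans (N.meet_le_right x y) (N.v4 x y)))
    (N.pre_of_le (N.ple_trans (N.meet_le_right x y) (N.yt2 x y)))

/-- preC : pre t1 Q -/
lemma preC (x y : A) :
    N.pre (N.imp x y)
      (N.imp (N.neg (N.meet (N.imp x y) (N.imp (N.neg y) (N.neg x)))) (N.neg x)) := by
  apply N.pre_imp'
  have e : N.meet (N.neg (N.meet (N.imp x y) (N.imp (N.neg y) (N.neg x)))) (N.imp x y) =
      N.join (N.meet (N.imp x y) (N.neg (N.imp x y)))
             (N.meet (N.imp x y) (N.neg (N.imp (N.neg y) (N.neg x)))) := by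
    rw [N.n4, N.mcomm (N.join (N.neg (N.imp x y)) (N.neg (N.imp (N.neg y) (N.neg x))))
      (N.imp x y), N.distrib]
  rw [e]
  apply N.pre_lub (N.pre_contr (N.imp x y) (N.neg x))
  have hb : N.ple (N.meet (N.imp x y) (N.neg (N.imp (N.neg y) (N.neg x))))
      (N.meet (N.meet x (N.imp x y)) (N.neg y)) :=
    N.le_meet (N.le_meet (N.ple_trans (N.meet_le_right _ _) (N.nt2x x y))
      (N.meet_le_left _ _))
      (N.ple_trans (N.meet_le_right _ _) (N.nt2ny x y))
  apply N.le_pre_trans hb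
  have e2 : N.meet (N.meet x (N.imp x y)) (N.neg y) =
      N.join (N.meet (N.neg y) (N.meet x (N.neg x)))
             (N.meet (N.neg y) (N.meet x y)) := by
    rw [N.f1d x y, N.mcomm (N.join (N.meet x (N.neg x)) (N.meet x y)) (N.neg y), N.distrib]
  rw [e2]
  apply N.pre_lub
  · exact N.le_pre_trans (N.meet_le_right _ _) (N.pre_contr x (N.neg x))
  · have : N.ple (N.meet (N.neg y) (N.meet x y)) (N.meet y (N.neg y)) :=
      N.le_meet (N.ple_trans (N.meet_le_right _ _) (N.meet_le_right x y))
        (N.meet_le_left _ _)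
    exact N.le_pre_trans this (N.pre_contr y (N.neg x))

/-- helper : pre (m x (n u)) (n t1) -/
lemma pre_mxnu_nt1 (x y : A) :
    N.pre (N.meet x (N.neg (N.meet (N.imp x y) (N.imp (N.neg y) (N.neg x)))))
      (N.neg (N.imp x y)) := by
  have e : N.meet x (N.neg (N.meet (N.imp x y) (N.imp (N.neg y) (N.neg x)))) =
      N.join (N.meet x (N.neg (N.imp x y)))
             (N.meet x (N.neg (N.imp (N.neg y) (N.neg x)))) := by
    rw [N.n4, N.distrib]
  rw [e]
  apply N.pre_lub (N.pre_of_le (N.meet_le_right _ _))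
  have h1 : N.ple (N.meet x (N.neg (N.imp (N.neg y) (N.neg x)))) (N.meet x (N.neg y)) :=
    N.le_meet (N.meet_le_left _ _) (N.ple_trans (N.meet_le_right _ _) (N.nt2ny x y))
  apply N.le_pre_trans h1
  have h2 : N.ple (N.meet x (N.neg y)) (N.join (N.neg x) (N.neg (N.imp x y))) := by
    rw [N.f2 x y]
    exact N.le_join_right _ _
  exact N.pre_of_aux (N.meet_le_left x (N.neg y)) h2

/-- preD3a : pre (n P) (n t1) -/
lemma preD3a (x y : A) :
    N.pre (N.neg (N.imp x (N.meet (N.imp x y) (N.imp (N.neg y) (N.neg x)))))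
      (N.neg (N.imp x y)) := by
  have h0 : N.ple (N.neg (N.imp x (N.meet (N.imp x y) (N.imp (N.neg y) (N.neg x)))))
      (N.meet x (N.neg (N.meet (N.imp x y) (N.imp (N.neg y) (N.neg x))))) :=
    N.le_meet (N.g2 x _) (N.g2b x _)
  exact N.le_pre_trans h0 (N.pre_mxnu_nt1 x y)

/-- preD3b : pre (n Q) (n t1) -/
lemma preD3b (x y : A) :
    N.pre (N.neg (N.imp (N.neg (N.meet (N.imp x y) (N.imp (N.neg y) (N.neg x)))) (N.neg x)))
      (N.neg (N.imp x y)) := by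
  have hx : N.ple (N.neg (N.imp (N.neg (N.meet (N.imp x y) (N.imp (N.neg y) (N.neg x))))
      (N.neg x))) x := by
    have h := N.g2b (N.neg (N.meet (N.imp x y) (N.imp (N.neg y) (N.neg x)))) (N.neg x)
    rwa [N.n3] at h
  have hu : N.ple (N.neg (N.imp (N.neg (N.meet (N.imp x y) (N.imp (N.neg y) (N.neg x))))
      (N.neg x))) (N.neg (N.meet (N.imp x y) (N.imp (N.neg y) (N.neg x)))) :=
    N.g2 (N.neg (N.meet (N.imp x y) (N.imp (N.neg y) (N.neg x)))) (N.neg x)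
  exact N.le_pre_trans (N.le_meet hx hu) (N.pre_mxnu_nt1 x y)

/-- preD4 : pre (n t1) (n P) -/
lemma preD4 (x y : A) :
    N.pre (N.neg (N.imp x y))
      (N.neg (N.imp x (N.meet (N.imp x y) (N.imp (N.neg y) (N.neg x))))) := by
  have h0 : N.ple (N.neg (N.imp x y))
      (N.meet x (N.neg (N.meet (N.imp x y) (N.imp (N.neg y) (N.neg x))))) := by
    apply N.le_meet (N.g2 x y)
    have h1 : N.ple (N.neg (N.imp x y))
        (N.join (N.neg (N.imp x y)) (N.neg (N.imp (N.neg y) (N.neg x)))) :=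
      N.le_join_left _ _
    rwa [← N.n4] at h1
  apply N.le_pre_trans h0
  have h2 : N.ple (N.meet x (N.neg (N.meet (N.imp x y) (N.imp (N.neg y) (N.neg x)))))
      (N.join (N.neg x)
        (N.neg (N.imp x (N.meet (N.imp x y) (N.imp (N.neg y) (N.neg x)))))) := by
    rw [N.f2 x (N.meet (N.imp x y) (N.imp (N.neg y) (N.neg x)))]
    exact N.le_join_right _ _
  exact N.pre_of_aux (N.meet_le_left _ _) h2

theorem main (x y : A) :
    N.imp x y = N.meet
      (N.imp x (N.meet (N.imp x y) (N.imp (N.neg y) (N.neg x))))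
      (N.imp (N.neg (N.meet (N.imp x y) (N.imp (N.neg y) (N.neg x)))) (N.neg x)) := by
  symm
  apply N.eq_of_pre4
  · exact N.le_pre_trans (N.meet_le_left _ _) (N.preA x y)
  · exact N.pre_glb (N.preB x y) (N.preC x y)
  · rw [N.n4]
    exact N.pre_lub (N.preD3a x y) (N.preD3b x y)
  · rw [N.n4]
    exact N.pre_le_trans (N.preD4 x y) (N.le_join_left _ _)

end NelsonAlgebra


theorem nelson_imp_eq_wimp_wimp {A : Type*} (N : NelsonAlgebra A) (x y : A) :
    N.imp x y = N.wimp x (N.wimp x y) := by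
  show N.imp x y = N.meet
      (N.imp x (N.meet (N.imp x y) (N.imp (N.neg y) (N.neg x))))
      (N.imp (N.neg (N.meet (N.imp x y) (N.imp (N.neg y) (N.neg x)))) (N.neg x))
  exact N.main x y
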